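/- Let X be a nonnegative random variable with E[X] = 1. Let a, c, d be real constants with a ∈ (0,1), c ∈ (0,1], d ∈ (0,1), a·c + d > 1, and a - 1 + d > 0. Suppose ∫₀^a P(X ≥ x) dx > c·a, and let T ≥ 0 satisfy ∫₀^T P(X ≥ x) dx = 1 - d. Then T < a and P(X ≥ T) > (c·a - 1 + d)/(a - 1 + d). -/

import Mathlib

open MeasureTheory

theorem stmt_7 {Ω : Type*} [MeasurableSpace Ω] (μ : Measure Ω) [IsProbabilityMeasure μ]
    (X : Ω → ℝ) (hX : ∀ ω, 0 ≤ X ω)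
    (hE : ∫ x in Set.Ioi (0:ℝ), (μ {ω | x ≤ X ω}).toReal = 1)
    (a c d : ℝ) (ha : a ∈ Set.Ioo (0:ℝ) 1) (hc : c ∈ Set.Ioc (0:ℝ) 1)
    (hd : d ∈ Set.Ioo (0:ℝ) 1) (hacd : a * c + d > 1) (had : a - 1 + d > 0)
    (hbig : ∫ x in Set.Ioc (0:ℝ) a, (μ {ω | x ≤ X ω}).toReal > c * a)
    (T : ℝ) (hT : 0 ≤ T)
    (hTd : ∫ x in Set.Ioc (0:ℝ) T, (μ {ω | x ≤ X ω}).toReal = 1 - d) :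
    T < a ∧ (μ {ω | T ≤ X ω}).toReal > (c * a - 1 + d) / (a - 1 + d) := by
  set F : ℝ → ℝ := fun x => (μ {ω | x ≤ X ω}).toReal with hF
  have hF_anti : Antitone F := by
    intro x y hxy
    exact ENNReal.toReal_mono (measure_ne_top μ _)
      (measure_mono (fun ω hω => le_trans hxy hω))
  have hF0 : ∀ x, 0 ≤ F x := fun x => ENNReal.toReal_nonneg
  have hF1 : ∀ x, F x ≤ 1 := by
    intro x
    have := prob_le_one (μ := μ) (s := {ω | x ≤ X ω})
    simpa [hF] using ENNReal.toReal_mono (by simp) this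
  have hFmeas : Measurable F := hF_anti.measurable
  have hInt : ∀ s t : ℝ, IntegrableOn F (Set.Ioc s t) := by
    intro s t
    refine Integrable.mono' (g := fun _ => (1:ℝ))
      (integrableOn_const measure_Ioc_lt_top.ne)
      hFmeas.aestronglyMeasurable (Filter.Eventually.of_forall fun x => ?_)
    rw [Real.norm_eq_abs, abs_of_nonneg (hF0 x)]; exact hF1 x
  have hTa : T < a := by
    by_contra h
    push_neg at h
    have hsub : Set.Ioc (0:ℝ) a ⊆ Set.Ioc 0 T := Set.Ioc_subset_Ioc_right h
    have := setIntegral_mono_set (hInt 0 T) (Filter.Eventually.of_forall hF0)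
      (HasSubset.Subset.eventuallyLE hsub)
    rw [hTd] at this
    nlinarith [hbig]
  refine ⟨hTa, ?_⟩
  -- split integral
  have hsplit : ∫ x in Set.Ioc T a, F x
      = (∫ x in Set.Ioc 0 a, F x) - ∫ x in Set.Ioc 0 T, F x := by
    have hu : Set.Ioc (0:ℝ) T ∪ Set.Ioc T a = Set.Ioc 0 a :=
      Set.Ioc_union_Ioc_eq_Ioc hT hTa.le
    have hd' : Disjoint (Set.Ioc (0:ℝ) T) (Set.Ioc T a) := Set.Ioc_disjoint_Ioc_of_le le_rfl
    rw [← hu, setIntegral_union hd' measurableSet_Ioc (hInt 0 T) (hInt T a)]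
    ring
  have hmid : c * a - (1 - d) < ∫ x in Set.Ioc T a, F x := by
    rw [hsplit, hTd]; linarith [hbig]
  -- bound integral by F T * (a - T)
  have hub : ∫ x in Set.Ioc T a, F x ≤ F T * (a - T) := by
    have : ∫ x in Set.Ioc T a, F x ≤ ∫ _x in Set.Ioc T a, F T := by
      refine setIntegral_mono_on (hInt T a) (integrableOn_const measure_Ioc_lt_top.ne)
        measurableSet_Ioc (fun x hx => hF_anti hx.1.le)
    rw [setIntegral_const] at this
    rw [Real.volume_real_Ioc_of_le (by linarith), smul_eq_mul] at this
    linarith [this]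
  -- T ≥ 1 - d
  have hTlb : 1 - d ≤ T := by
    have : ∫ x in Set.Ioc (0:ℝ) T, F x ≤ ∫ _x in Set.Ioc (0:ℝ) T, (1:ℝ) := by
      refine setIntegral_mono_on (hInt 0 T) (integrableOn_const measure_Ioc_lt_top.ne)
        measurableSet_Ioc (fun x _ => hF1 x)
    rw [setIntegral_const, Real.volume_real_Ioc_of_le (by linarith), smul_eq_mul] at this
    rw [hTd] at this
    simpa using this
  have hFT0 : 0 ≤ F T := hF0 T
  have key : c * a - 1 + d < F T * (a - 1 + d) := by
    nlinarith [hub, hmid, hTlb]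
  rw [gt_iff_lt, div_lt_iff₀ had]
  linarith [key]
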